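/- Invariant step for pure asymmetric strategy (Max wins): let W > 1, μ > 1, α ∈ (0,1) with 1 − α = (1+α)^(−μ), N = max(S, (W−1)S) for S > 0, s ∈ [0,S], B > 0, x = (s/N)·α·B, y ≥ 0. If B ≥ B₀·(1+α)^(−H/N), then B − x + Wy ≥ B₀·(1+α)^(−(H + μs)/N). -/
import Mathlib

/-- Invariant step for the pure asymmetric strategy when Max wins: with
`1 - α = (1+α)^(-μ)`, `N = max S ((W-1)S)`, `x = (s/N)·α·B` and `y ≥ 0`, the
invariant `B ≥ B₀·(1+α)^(-H/N)` yields `B - x + Wy ≥ B₀·(1+α)^(-(H + μs)/N)`. -/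
theorem asymmetric_invariant_max_wins (W μ α S s B B₀ H y : ℝ) (hW : 1 < W)
    (hμ : 1 < μ) (hα : α ∈ Set.Ioo (0:ℝ) 1) (hαμ : 1 - α = (1 + α) ^ (-μ))
    (hS : 0 < S) (hs : s ∈ Set.Icc (0:ℝ) S) (hB : 0 < B) (hB₀ : 0 < B₀)
    (hy : 0 ≤ y)
    (hinv : B ≥ B₀ * (1 + α) ^ (-H / max S ((W - 1) * S))) :
    B - (s / max S ((W - 1) * S)) * α * B + W * y
      ≥ B₀ * (1 + α) ^ (-(H + μ * s) / max S ((W - 1) * S)) := by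
  obtain ⟨hα0, hα1⟩ := hα
  obtain ⟨hs0, hsS⟩ := hs
  set N : ℝ := max S ((W - 1) * S) with hN
  have hN0 : 0 < N := lt_of_lt_of_le hS (le_max_left _ _)
  have ht0 : 0 ≤ s / N := div_nonneg hs0 hN0.le
  have ht1 : s / N ≤ 1 := by
    rw [div_le_one hN0]
    exact hsS.trans (le_max_left _ _)
  have h1α : (0:ℝ) < 1 + α := by linarith
  -- Bernoulli: (1 - α)^(s/N) ≤ 1 - (s/N)*α
  have hbern : (1 - α) ^ (s / N : ℝ) ≤ 1 - (s / N) * α := by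
    have := rpow_one_add_le_one_add_mul_self (s := -α) (by linarith) ht0 ht1
    simpa [mul_comm, mul_neg, sub_eq_add_neg] using this
  have hkey : (1 + α) ^ (-(μ * s) / N) ≤ 1 - (s / N) * α := by
    have : (1 + α) ^ (-(μ * s) / N) = ((1 + α) ^ (-μ)) ^ (s / N : ℝ) := by
      rw [← Real.rpow_mul h1α.le]
      ring_nf
    rw [this, ← hαμ]
    exact hbern
  have hpos : 0 < B₀ * (1 + α) ^ (-H / N) := by positivity
  have h2 : B₀ * (1 + α) ^ (-(H + μ * s) / N)
      = B₀ * (1 + α) ^ (-H / N) * (1 + α) ^ (-(μ * s) / N) := by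
    rw [mul_assoc, ← Real.rpow_add h1α]
    ring_nf
  have h3 : B₀ * (1 + α) ^ (-H / N) * (1 + α) ^ (-(μ * s) / N)
      ≤ B * (1 - (s / N) * α) := by
    apply mul_le_mul hinv hkey (Real.rpow_nonneg h1α.le _) hB.le
  nlinarith [mul_nonneg (by linarith : (0:ℝ) ≤ W) hy]
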